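/- Let F be an acyclic graph (forest) on n vertices and k ≥ 2. Then α_k(F) ≥ ⌈((k−1)/k)·n⌉, i.e., the lower bound ((k−1)/k)n can be rounded up to the nearest integer. -/

import Mathlib

open SimpleGraph

/-- A set `S` is a generalized `k`-independent set in `G` if the induced subgraph `G[S]`
contains no tree on `k` vertices, equivalently every connected component of `G[S]`
has at most `k - 1` vertices. -/
def IsGenKIndep {V : Type*} (G : SimpleGraph V) (k : ℕ) (S : Set V) : Prop :=
  ∀ c : (G.induce S).ConnectedComponent, Nat.card c.supp ≤ k - 1

/-- The generalized `k`-independence number: the maximum size of a generalized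
`k`-independent set. -/
noncomputable def alphaK {V : Type*} (G : SimpleGraph V) (k : ℕ) : ℕ :=
  sSup {m | ∃ S : Set V, IsGenKIndep G k S ∧ S.ncard = m}

section Aux

variable {V : Type*}

lemma reach_induce_of_walk (F : SimpleGraph V) (S : Set V) {x y : V}
    (p : F.Walk x y) (hp : ∀ z ∈ p.support, z ∈ S) :
    (F.induce S).Reachable ⟨x, hp x p.start_mem_support⟩ ⟨y, hp y p.end_mem_support⟩ := by
  induction p with
  | nil => exact Reachable.refl _
  | @cons a b c h q ih =>
    have hz : ∀ z ∈ q.support, z ∈ S := fun z hz => hp z (by simp [hz])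
    have h1 : (F.induce S).Adj ⟨a, hp a (by simp)⟩ ⟨b, hz b q.start_mem_support⟩ := by
      simpa using h
    exact (h1.reachable).trans (ih hz)

lemma exists_walk_of_reach_induce (F : SimpleGraph V) (S : Set V) {x y : ↥S}
    (h : (F.induce S).Reachable x y) :
    ∃ p : F.Walk x.1 y.1, ∀ z ∈ p.support, z ∈ S := by
  obtain ⟨q⟩ := h
  refine ⟨q.map (SimpleGraph.Embedding.induce S).toHom, ?_⟩
  intro z hz
  replace hz : z ∈ (q.map (SimpleGraph.Embedding.induce S).toHom).support := hz
  rw [Walk.support_map, List.mem_map] at hz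
  obtain ⟨⟨w, hw⟩, _, rfl⟩ := hz
  exact hw

lemma induce_supp_connected (F : SimpleGraph V) (S : Set V)
    (c : (F.induce S).ConnectedComponent) :
    (F.induce (Subtype.val '' c.supp)).Connected := by
  obtain ⟨z, hz⟩ := c.exists_rep
  rw [connected_iff]
  refine ⟨?_, ⟨⟨z.1, ⟨z, hz, rfl⟩⟩⟩⟩
  rintro ⟨x, x', hx's, rfl⟩ ⟨y, y', hy's, rfl⟩
  have hre : (F.induce S).Reachable x' y' := by
    rw [ConnectedComponent.mem_supp_iff] at hx's hy's
    exact ConnectedComponent.exact (hx's.trans hy's.symm)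
  obtain ⟨q⟩ := hre
  have hsupp : ∀ w ∈ (q.map (SimpleGraph.Embedding.induce S).toHom).support,
      w ∈ Subtype.val '' c.supp := by
    intro w hw
    rw [Walk.support_map, List.mem_map] at hw
    obtain ⟨u, hu, rfl⟩ := hw
    refine ⟨u, ?_, rfl⟩
    haveI := Classical.decEq ↥S
    have hr : (F.induce S).Reachable x' u := (q.takeUntil u hu).reachable
    rw [ConnectedComponent.mem_supp_iff] at hx's ⊢
    exact (ConnectedComponent.sound hr.symm).trans hx's
  exact reach_induce_of_walk F _ _ hsupp

lemma walk_stay (F : SimpleGraph V) {S₁ S₂ : Set V}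
    (hcross : ∀ x ∈ S₁, ∀ y ∈ S₂, ¬F.Adj x y) {x y : V} (p : F.Walk x y) :
    (∀ z ∈ p.support, z ∈ S₁ ∨ z ∈ S₂) → x ∈ S₁ → ∀ z ∈ p.support, z ∈ S₁ := by
  induction p with
  | nil => intro _ hx z hz; rw [Walk.support_nil, List.mem_singleton] at hz; exact hz ▸ hx
  | @cons a b c h q ih =>
    intro hp hx z hz
    have hb : b ∈ S₁ := by
      by_contra hb1
      have hb2 : b ∈ S₂ := (hp b (by simp)).resolve_left hb1
      exact hcross a hx b hb2 h
    rw [Walk.support_cons, List.mem_cons] at hz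
    rcases hz with rfl | hz
    · exact hx
    · exact ih (fun z hz => hp z (by simp [hz])) hb z hz

lemma union_aux [Finite V] (F : SimpleGraph V) (k : ℕ) {S₁ S₂ T : Set V}
    (hT : ∀ z ∈ T, z ∈ S₁ ∨ z ∈ S₂)
    (h1 : IsGenKIndep F k S₁)
    (hcross : ∀ x ∈ S₁, ∀ y ∈ S₂, ¬F.Adj x y)
    (c : (F.induce T).ConnectedComponent)
    (x₀ : ↥T) (hx₀c : x₀ ∈ c.supp) (hx₀ : x₀.1 ∈ S₁) :
    Nat.card c.supp ≤ k - 1 := by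
  set d := (F.induce S₁).connectedComponentMk ⟨x₀.1, hx₀⟩ with hd
  have key : ∀ y : c.supp, ∃ hy : y.1.1 ∈ S₁, (⟨y.1.1, hy⟩ : ↥S₁) ∈ d.supp := by
    rintro ⟨y, hy⟩
    have hre : (F.induce T).Reachable x₀ y := by
      rw [ConnectedComponent.mem_supp_iff] at hx₀c hy
      exact ConnectedComponent.exact (hx₀c.trans hy.symm)
    obtain ⟨p, hp⟩ := exists_walk_of_reach_induce F _ hre
    have hstay := walk_stay F hcross p (fun z hz => hT z (hp z hz)) hx₀
    have hy1 : y.1 ∈ S₁ := hstay y.1 p.end_mem_support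
    refine ⟨hy1, ?_⟩
    have := reach_induce_of_walk F S₁ p hstay
    rw [ConnectedComponent.mem_supp_iff, hd]
    exact (ConnectedComponent.sound this).symm
  choose f hf using key
  have hinj : Function.Injective (fun y : c.supp => (⟨⟨y.1.1, f y⟩, hf y⟩ : d.supp)) := by
    intro a b hab
    apply Subtype.ext; apply Subtype.ext
    exact congrArg (fun z : d.supp => z.1.1) hab
  calc Nat.card c.supp ≤ Nat.card d.supp := Nat.card_le_card_of_injective _ hinj
    _ ≤ k - 1 := h1 d

lemma isGenKIndep_union [Finite V] (F : SimpleGraph V) (k : ℕ) {S₁ S₂ : Set V}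
    (h1 : IsGenKIndep F k S₁) (h2 : IsGenKIndep F k S₂)
    (hcross : ∀ x ∈ S₁, ∀ y ∈ S₂, ¬F.Adj x y) :
    IsGenKIndep F k (S₁ ∪ S₂) := by
  intro c
  obtain ⟨x₀, hx₀c⟩ := c.exists_rep
  have hx₀c' : x₀ ∈ c.supp := hx₀c
  rcases x₀.2 with hx | hx
  · exact union_aux F k (fun z hz => hz) h1 hcross c x₀ hx₀c' hx
  · exact union_aux F k (fun z hz => hz.symm) h2
      (fun x hx y hy hadj => hcross y hy x hx hadj.symm) c x₀ hx₀c' hx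

lemma eq_of_acyclic (F : SimpleGraph V) (hF : F.IsAcyclic) {u₁ u₂ v : V}
    (h1 : F.Adj v u₁) (h2 : F.Adj v u₂) (p : F.Walk u₁ u₂) (hp : v ∉ p.support) :
    u₁ = u₂ := by
  classical
  have hq : p.bypass.IsPath := p.bypass_isPath
  have hv : v ∉ p.bypass.support := fun h => hp (p.support_bypass_subset h)
  have heq := hF.path_unique
    ⟨Walk.cons h1 p.bypass, by rw [Walk.cons_isPath_iff]; exact ⟨hq, hv⟩⟩
    (SimpleGraph.Path.singleton h2)
  have hs := congrArg (fun P : F.Path v u₂ => P.1.support) heq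
  simp only [SimpleGraph.Path.singleton, Walk.support_cons, Walk.support_nil] at hs
  rw [p.bypass.support_eq_cons] at hs
  injection hs with _ hs2
  injection hs2

lemma exit_aux (F : SimpleGraph V) {W : Set V} {v : V}
    (C : (F.induce (W \ {v})).ConnectedComponent) (x t : ↥W)
    (p : (F.induce W).Walk x t) :
    t.1 = v → ∀ hx : x.1 ∈ W \ {v}, (⟨x.1, hx⟩ : ↥(W \ {v})) ∈ C.supp →
    ∃ u, ∃ hu : u ∈ W \ {v}, (⟨u, hu⟩ : ↥(W \ {v})) ∈ C.supp ∧ F.Adj u v := by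
  induction p with
  | nil =>
    intro ht hx _
    exact absurd ht hx.2
  | @cons a b t h q ih =>
    intro ht hx hxc
    by_cases hb : b.1 = v
    · exact ⟨a.1, hx, hxc, hb ▸ (by simpa using h)⟩
    · have hb' : b.1 ∈ W \ {v} := ⟨b.2, hb⟩
      have hadj : (F.induce (W \ {v})).Adj ⟨a.1, hx⟩ ⟨b.1, hb'⟩ := by simpa using h
      have hbc : (⟨b.1, hb'⟩ : ↥(W \ {v})) ∈ C.supp := by
        rw [ConnectedComponent.mem_supp_iff] at hxc ⊢
        exact (ConnectedComponent.sound hadj.symm.reachable).trans hxc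
      exact ih ht hb' hbc

def Good (F : SimpleGraph V) (k : ℕ) (A : Set V) (v : V) (W : Set V) : Prop :=
  v ∈ W ∧ W ⊆ A ∧ k ≤ W.ncard ∧ (F.induce W).Connected ∧
    ∀ x ∈ W, x ≠ v → ∀ y ∈ A, y ∉ W → ¬F.Adj x y

lemma good_exists [Finite V] (F : SimpleGraph V) {A : Set V} (k : ℕ)
    (c : (F.induce A).ConnectedComponent) (hc : k ≤ Nat.card c.supp) :
    ∃ v W, Good F k A v W := by
  obtain ⟨z, hz⟩ := c.exists_rep
  have hzc : z ∈ c.supp := hz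
  refine ⟨z.1, Subtype.val '' c.supp, ⟨z, hzc, rfl⟩, ?_, ?_, induce_supp_connected F A c, ?_⟩
  · rintro _ ⟨u, _, rfl⟩; exact u.2
  · rw [Set.ncard_image_of_injective _ Subtype.val_injective, ← Nat.card_coe_set_eq]
    exact hc
  · rintro _ ⟨x', hx', rfl⟩ _ y hyA hyW hadj
    apply hyW
    refine ⟨⟨y, hyA⟩, ?_, rfl⟩
    rw [ConnectedComponent.mem_supp_iff] at hx' ⊢
    have hadj' : (F.induce A).Adj ⟨y, hyA⟩ x' := by simpa using hadj.symm
    exact (ConnectedComponent.sound hadj'.reachable).trans hx'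

lemma struct [Finite V] (F : SimpleGraph V) (hF : F.IsAcyclic) {A : Set V} {k : ℕ}
    (hk : 2 ≤ k) (hA : ∃ c : (F.induce A).ConnectedComponent, k ≤ Nat.card c.supp) :
    ∃ v W, Good F k A v W ∧ IsGenKIndep F k (W \ {v}) := by
  classical
  obtain ⟨c, hc⟩ := hA
  set N := {m | ∃ v W, Good F k A v W ∧ W.ncard = m} with hNdef
  have hN : N.Nonempty := by
    obtain ⟨v, W, h⟩ := good_exists F k c hc
    exact ⟨W.ncard, v, W, h, rfl⟩
  obtain ⟨v, W, hG, hWcard⟩ := Nat.sInf_mem hN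
  refine ⟨v, W, hG, ?_⟩
  by_contra hcon
  rw [IsGenKIndep] at hcon; push_neg at hcon
  obtain ⟨C, hC⟩ := hcon
  have hCk : k ≤ Nat.card C.supp := by omega
  obtain ⟨hvW, hWA, hWk, hWconn, hWout⟩ := hG
  set C' := Subtype.val '' C.supp with hC'def
  have hC'sub : C' ⊆ W \ {v} := by rintro _ ⟨u, _, rfl⟩; exact u.2
  obtain ⟨z, hz⟩ := C.exists_rep
  have hzc : z ∈ C.supp := hz
  have hx0 : (z.1 : V) ∈ W \ {v} := z.2
  obtain ⟨pw⟩ := hWconn.preconnected ⟨z.1, hx0.1⟩ ⟨v, hvW⟩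
  obtain ⟨u, hu, huc, huadj⟩ := exit_aux F C ⟨z.1, hx0.1⟩ ⟨v, hvW⟩ pw rfl hx0 hzc
  have huniq : ∀ x, ∀ hx : x ∈ W \ {v}, (⟨x, hx⟩ : ↥(W \ {v})) ∈ C.supp →
      F.Adj x v → x = u := by
    intro x hx hxc hadj
    have hre : (F.induce (W \ {v})).Reachable ⟨x, hx⟩ ⟨u, hu⟩ := by
      rw [ConnectedComponent.mem_supp_iff] at hxc huc
      exact ConnectedComponent.exact (hxc.trans huc.symm)
    obtain ⟨p, hp⟩ := exists_walk_of_reach_induce F _ hre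
    exact eq_of_acyclic F hF hadj.symm huadj.symm p (fun hvp => (hp v hvp).2 rfl)
  have hgood' : Good F k A u C' := by
    refine ⟨⟨⟨u, hu⟩, huc, rfl⟩, fun x hx => hWA (hC'sub hx).1, ?_,
      induce_supp_connected F _ C, ?_⟩
    · rw [hC'def, Set.ncard_image_of_injective _ Subtype.val_injective,
        ← Nat.card_coe_set_eq]
      exact hCk
    · rintro _ ⟨x', hx'c, rfl⟩ hxu y hyA hyC' hadj
      by_cases hyv : y = v
      · exact hxu (huniq x'.1 x'.2 hx'c (hyv ▸ hadj))
      · by_cases hyW : y ∈ W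
        · have hy' : y ∈ W \ {v} := ⟨hyW, hyv⟩
          apply hyC'
          refine ⟨⟨y, hy'⟩, ?_, rfl⟩
          rw [ConnectedComponent.mem_supp_iff] at hx'c ⊢
          have hadj' : (F.induce (W \ {v})).Adj ⟨y, hy'⟩ x' := by simpa using hadj.symm
          exact (ConnectedComponent.sound hadj'.reachable).trans hx'c
        · exact hWout x'.1 x'.2.1 x'.2.2 y hyA hyW hadj
  have hss : C' ⊂ W := by
    refine ⟨hC'sub.trans Set.diff_subset, fun h => ?_⟩
    exact (hC'sub (h hvW)).2 rfl
  have hlt : C'.ncard < W.ncard := Set.ncard_lt_ncard hss (Set.toFinite W)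
  have hle : sInf N ≤ C'.ncard := Nat.sInf_le ⟨u, C', hgood', rfl⟩
  omega

lemma exists_big_indep [Finite V] (F : SimpleGraph V) (hF : F.IsAcyclic) {k : ℕ}
    (hk : 2 ≤ k) (n : ℕ) :
    ∀ A : Set V, A.ncard = n → ∃ S, S ⊆ A ∧ IsGenKIndep F k S ∧
      A.ncard - A.ncard / k ≤ S.ncard := by
  induction n using Nat.strong_induction_on with
  | _ n ih =>
    intro A hAcard
    by_cases hA : IsGenKIndep F k A
    · exact ⟨A, subset_rfl, hA, Nat.sub_le _ _⟩
    · rw [IsGenKIndep] at hA; push_neg at hA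
      obtain ⟨c, hc⟩ := hA
      have hc' : k ≤ Nat.card c.supp := by omega
      obtain ⟨v, W, ⟨hvW, hWA, hWk, _, hWout⟩, hWindep⟩ := struct F hF hk ⟨c, hc'⟩
      set A' := A \ W with hA'def
      have hWfin : W.Finite := Set.toFinite W
      have hA'card : A'.ncard = n - W.ncard := by
        rw [hA'def, Set.ncard_diff hWA, hAcard]
      have hWn : W.ncard ≤ n := hAcard ▸ Set.ncard_le_ncard hWA (Set.toFinite A)
      have hWpos : 1 ≤ W.ncard := by
        have := hWk; omega
      have hlt : A'.ncard < n := by omega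
      obtain ⟨S', hS'A, hS'indep, hS'card⟩ := ih A'.ncard hlt A' rfl
      refine ⟨(W \ {v}) ∪ S', ?_, ?_, ?_⟩
      · rintro x (hx | hx)
        · exact hWA hx.1
        · exact (hS'A hx).1
      · refine isGenKIndep_union F k hWindep hS'indep ?_
        intro x hx y hy hadj
        have hy' : y ∈ A' := hS'A hy
        exact hWout x hx.1 hx.2 y hy'.1 hy'.2 hadj
      · have hdisj : Disjoint (W \ {v}) S' := by
          refine Set.disjoint_left.mpr fun x hx hxS' => ?_
          exact (hS'A hxS').2 hx.1
        rw [Set.ncard_union_eq hdisj (Set.toFinite _) (Set.toFinite _),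
          Set.ncard_diff_singleton_of_mem hvW]
        set w := W.ncard
        rw [hA'card] at hS'card
        have hkey : (n - w) / k + 1 ≤ n / k := by
          have h1 : (n - w) / k + 1 = (n - w + k) / k := (Nat.add_div_right _ (by omega)).symm
          have h2 : (n - w + k) / k ≤ n / k := Nat.div_le_div_right (by omega)
          omega
        rw [hAcard]
        omega

end Aux

/-- For every acyclic graph `F` on `n` vertices and `k ≥ 2`,
`α_k(F) ≥ ⌈((k-1)/k)·n⌉`. -/
theorem alphaK_forest_lower_bound {V : Type*} [Fintype V] (F : SimpleGraph V)
    (hF : F.IsAcyclic) (k : ℕ) (hk : 2 ≤ k) :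
    ⌈((k : ℚ) - 1) / k * (Nat.card V)⌉ ≤ (alphaK F k : ℤ) := by
  set n := Nat.card V with hn
  obtain ⟨S, _, hSindep, hScard⟩ := exists_big_indep F hF hk (Set.univ : Set V).ncard
    Set.univ rfl
  rw [Set.ncard_univ, ← hn] at hScard
  have hbdd : BddAbove {m | ∃ S : Set V, IsGenKIndep F k S ∧ S.ncard = m} := by
    refine ⟨n, ?_⟩
    rintro m ⟨T, _, rfl⟩
    calc T.ncard ≤ (Set.univ : Set V).ncard :=
          Set.ncard_le_ncard (Set.subset_univ T) Set.finite_univ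
      _ = n := by rw [Set.ncard_univ]
  have halpha : n - n / k ≤ alphaK F k :=
    le_trans hScard (le_csSup hbdd ⟨S, hSindep, rfl⟩)
  have hceil : ⌈((k : ℚ) - 1) / k * n⌉ ≤ ((n - n / k : ℕ) : ℤ) := by
    rw [Int.ceil_le]
    have hk0 : (k : ℚ) ≠ 0 := by positivity
    have h1 : ((k : ℚ) - 1) / k * n = n - n / k := by field_simp
    have h2 : ((n / k : ℕ) : ℚ) ≤ (n : ℚ) / k := Nat.cast_div_le
    have h3 : ((n - n / k : ℕ) : ℤ) = (n : ℤ) - ((n / k : ℕ) : ℤ) := by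
      have := Nat.div_le_self n k; omega
    rw [h3, Int.cast_sub, Int.cast_natCast, Int.cast_natCast, h1]
    linarith
  calc ⌈((k : ℚ) - 1) / k * n⌉ ≤ ((n - n / k : ℕ) : ℤ) := hceil
    _ ≤ (alphaK F k : ℤ) := by exact_mod_cast halpha
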